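/- Let I ⊆ ℝ be an open interval and u : I → ℝ continuous. Suppose that for every x ∈ I and every ε > 0 there exist δ > 0 with (x−δ, x+δ) ⊆ I and a function ρ : ℝ → ℝ that is twice continuously differentiable on (x−δ, x+δ) such that ρ(x) = u(x), ρ(y) ≥ u(y) for all y ∈ (x−δ, x+δ), and deriv (deriv ρ) y ≤ ε for all y ∈ (x−δ, x+δ). Then u is concave on I. -/

import Mathlib

open Set

private lemma quad_hasDerivAt (c0 c1 c2 t : ℝ) :
    HasDerivAt (fun t : ℝ => c0 + c1*t + c2*t^2) (c1 + 2*c2*t) t := by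
  have h := ((hasDerivAt_const t c0).add ((hasDerivAt_id t).const_mul c1)).add
    ((hasDerivAt_pow 2 t).const_mul c2)
  refine h.congr_deriv ?_
  push_cast; ring

private lemma aux_strictConcave (J : Set ℝ) (hJo : IsOpen J) (hJc : Convex ℝ J)
    (ρ : ℝ → ℝ) (hρ : ContDiffOn ℝ 2 ρ J)
    (c0 c1 c2 ε : ℝ) (hd : ∀ y ∈ J, deriv (deriv ρ) y ≤ ε) (hneg : ε + 2*c2 < 0) :
    StrictConcaveOn ℝ J (fun t => ρ t + (c0 + c1*t + c2*t^2)) := by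
  have hρd : ∀ y ∈ J, DifferentiableAt ℝ ρ y := fun y hy =>
    (hρ.differentiableOn (by norm_num)).differentiableAt (hJo.mem_nhds hy)
  have hρ1 : ContDiffOn ℝ 1 (deriv ρ) J := hρ.deriv_of_isOpen hJo (by norm_num)
  have hρ'd : ∀ y ∈ J, DifferentiableAt ℝ (deriv ρ) y := fun y hy =>
    (hρ1.differentiableOn (by norm_num)).differentiableAt (hJo.mem_nhds hy)
  apply strictConcaveOn_of_deriv2_neg hJc
  · exact hρ.continuousOn.add (Continuous.continuousOn (by fun_prop))
  · intro y hy
    rw [hJo.interior_eq] at hy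
    have h1 : ∀ z ∈ J, deriv (fun t => ρ t + (c0 + c1*t + c2*t^2)) z
        = deriv ρ z + (c1 + 2*c2*z) := by
      intro z hz
      exact ((hρd z hz).hasDerivAt.add (quad_hasDerivAt c0 c1 c2 z)).deriv
    have h2 : deriv (fun t => ρ t + (c0 + c1*t + c2*t^2)) =ᶠ[nhds y]
        fun z => deriv ρ z + (c1 + 2*c2*z) :=
      Filter.eventually_of_mem (hJo.mem_nhds hy) h1
    have hlin : HasDerivAt (fun z : ℝ => c1 + 2*c2*z) (2*c2) y := by
      have h := (hasDerivAt_const y c1).add ((hasDerivAt_id y).const_mul (2*c2))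
      exact h.congr_deriv (by ring)
    have h3 : deriv (fun z => deriv ρ z + (c1 + 2*c2*z)) y
        = deriv (deriv ρ) y + 2*c2 := ((hρ'd y hy).hasDerivAt.add hlin).deriv
    have h4 : deriv^[2] (fun t => ρ t + (c0 + c1*t + c2*t^2)) y
        = deriv (deriv ρ) y + 2*c2 := by
      show deriv (deriv (fun t => ρ t + (c0 + c1*t + c2*t^2))) y = _
      rw [h2.deriv_eq, h3]
    rw [h4]
    have := hd y hy
    linarith

private lemma no_interior_min (a b : ℝ) (f : ℝ → ℝ)
    (x₀ : ℝ)
    (hmin : ∀ y ∈ Icc a b, f x₀ ≤ f y)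
    (δ : ℝ) (hδ : 0 < δ) (hsub : Ioo (x₀ - δ) (x₀ + δ) ⊆ Icc a b)
    (ψ : ℝ → ℝ) (hψ : StrictConcaveOn ℝ (Ioo (x₀ - δ) (x₀ + δ)) ψ)
    (heq : ψ x₀ = f x₀) (hle : ∀ y ∈ Ioo (x₀ - δ) (x₀ + δ), f y ≤ ψ y) : False := by
  have ht₁ : x₀ - δ/2 ∈ Ioo (x₀ - δ) (x₀ + δ) := by constructor <;> linarith
  have ht₂ : x₀ + δ/2 ∈ Ioo (x₀ - δ) (x₀ + δ) := by constructor <;> linarith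
  have hne : x₀ - δ/2 ≠ x₀ + δ/2 := by intro h; linarith [h]
  have h := hψ.2 ht₁ ht₂ hne (by norm_num : (0:ℝ) < 1/2) (by norm_num : (0:ℝ) < 1/2)
    (by norm_num)
  have hmid : (1/2:ℝ) • (x₀ - δ/2) + (1/2:ℝ) • (x₀ + δ/2) = x₀ := by
    simp only [smul_eq_mul]; ring
  rw [hmid] at h
  have h1 : f x₀ ≤ f (x₀ - δ/2) := hmin _ (hsub ht₁)
  have h2 : f x₀ ≤ f (x₀ + δ/2) := hmin _ (hsub ht₂)
  have h3 : f (x₀ - δ/2) ≤ ψ (x₀ - δ/2) := hle _ ht₁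
  have h4 : f (x₀ + δ/2) ≤ ψ (x₀ + δ/2) := hle _ ht₂
  simp only [smul_eq_mul] at h
  linarith

/-- Concavity via upper support functions with almost nonpositive second derivative:
if a continuous function `u` on an open interval `I` admits, at every point and for
every `ε > 0`, a C² upper support function with second derivative at most `ε` on a
small interval around the point, then `u` is concave on `I`. -/
theorem concave_of_upper_support
    (I : Set ℝ) (hIopen : IsOpen I) (hIinterval : Convex ℝ I)
    (u : ℝ → ℝ) (hu : ContinuousOn u I)
    (hsupp : ∀ x ∈ I, ∀ ε : ℝ, 0 < ε →
      ∃ δ : ℝ, 0 < δ ∧ Ioo (x - δ) (x + δ) ⊆ I ∧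
        ∃ ρ : ℝ → ℝ, ContDiffOn ℝ 2 ρ (Ioo (x - δ) (x + δ)) ∧
          ρ x = u x ∧
          (∀ y ∈ Ioo (x - δ) (x + δ), ρ y ≥ u y) ∧
          (∀ y ∈ Ioo (x - δ) (x + δ), deriv (deriv ρ) y ≤ ε)) :
    ConcaveOn ℝ I u := by
  -- Key chord inequality
  have key : ∀ x ∈ I, ∀ y ∈ I, x < y → ∀ c ∈ Icc x y,
      u x + (u y - u x)/(y - x) * (c - x) ≤ u c := by
    intro x hx y hy hxy c hc
    have hIcc : Icc x y ⊆ I := hIinterval.ordConnected.out hx hy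
    set s : ℝ := (u y - u x)/(y - x) with hs
    by_contra hlt
    push_neg at hlt
    have hyx : y - x ≠ 0 := sub_ne_zero.2 (ne_of_gt hxy)
    have huy : u x + s * (y - x) = u y := by rw [hs]; field_simp; ring
    -- c is strictly interior
    have hcx : x < c := by
      rcases lt_or_eq_of_le hc.1 with h | h
      · exact h
      · exfalso; rw [← h] at hlt; simp at hlt
    have hcy : c < y := by
      rcases lt_or_eq_of_le hc.2 with h | h
      · exact h
      · exfalso; rw [h] at hlt; linarith
    set gap : ℝ := u x + s * (c - x) - u c with hgap
    have hgappos : 0 < gap := by rw [hgap]; linarith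
    have hden : 0 < (c - x) * (y - c) := mul_pos (by linarith) (by linarith)
    have hdenne : (c - x) * (y - c) ≠ 0 := ne_of_gt hden
    set η : ℝ := gap / (2 * ((c - x) * (y - c))) with hη
    have hηpos : 0 < η := by rw [hη]; exact div_pos hgappos (by linarith)
    set c0 : ℝ := -(u x) + s*x - η*(x*y) with hc0
    set c1 : ℝ := -s + η*(x+y) with hc1
    set c2 : ℝ := -η with hc2
    set g : ℝ → ℝ := fun t => c0 + c1*t + c2*t^2 with hgdef
    set φ : ℝ → ℝ := fun t => u t + g t with hφdef
    have hφ : ∀ t, φ t = u t - (u x + s*(t-x)) + η*((t-x)*(y-t)) := by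
      intro t
      simp only [hφdef, hgdef, hc0, hc1, hc2]
      ring
    have hφx : φ x = 0 := by rw [hφ x]; ring
    have hφy : φ y = 0 := by rw [hφ y]; linear_combination -huy
    have hterm : η * ((c-x)*(y-c)) = gap / 2 := by
      rw [hη, div_mul_eq_mul_div, mul_div_mul_right _ _ hdenne]
    have hφc : φ c < 0 := by
      rw [hφ c, hterm]
      rw [hgap] at hgappos ⊢
      linarith
    have hgcont : Continuous g := by rw [hgdef]; fun_prop
    have hφcont : ContinuousOn φ (Icc x y) :=
      (hu.mono hIcc).add (hgcont.continuousOn)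
    obtain ⟨x₀, hx₀mem, hx₀min⟩ :=
      isCompact_Icc.exists_isMinOn (nonempty_Icc.2 hxy.le) hφcont
    have hmin : ∀ t ∈ Icc x y, φ x₀ ≤ φ t := fun t ht => hx₀min ht
    have hφx₀ : φ x₀ < 0 := lt_of_le_of_lt (hmin c hc) hφc
    have hx₀x : x < x₀ := by
      rcases lt_or_eq_of_le hx₀mem.1 with h | h
      · exact h
      · exfalso; rw [← h, hφx] at hφx₀; linarith
    have hx₀y : x₀ < y := by
      rcases lt_or_eq_of_le hx₀mem.2 with h | h
      · exact h
      · exfalso; rw [h, hφy] at hφx₀; linarith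
    have hx₀I : x₀ ∈ I := hIcc hx₀mem
    obtain ⟨δ, hδpos, hsubI, ρ, hρC2, hρeq, hρge, hρd2⟩ := hsupp x₀ hx₀I η hηpos
    set δ' : ℝ := min δ (min (x₀ - x) (y - x₀)) with hδ'
    have hδ'pos : 0 < δ' :=
      lt_min hδpos (lt_min (by linarith) (by linarith))
    have hδ'δ : δ' ≤ δ := min_le_left _ _
    have hδ'x : δ' ≤ x₀ - x := le_trans (min_le_right _ _) (min_le_left _ _)
    have hδ'y : δ' ≤ y - x₀ := le_trans (min_le_right _ _) (min_le_right _ _)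
    have hJsub : Ioo (x₀ - δ') (x₀ + δ') ⊆ Ioo (x₀ - δ) (x₀ + δ) := by
      apply Ioo_subset_Ioo <;> linarith
    have hJIcc : Ioo (x₀ - δ') (x₀ + δ') ⊆ Icc x y := by
      intro t ht
      exact ⟨by have := ht.1; linarith, by have := ht.2; linarith⟩
    have hψsc : StrictConcaveOn ℝ (Ioo (x₀ - δ') (x₀ + δ'))
        (fun t => ρ t + (c0 + c1*t + c2*t^2)) := by
      apply aux_strictConcave _ isOpen_Ioo (convex_Ioo _ _) ρ
        (hρC2.mono hJsub) c0 c1 c2 η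
      · exact fun z hz => hρd2 z (hJsub hz)
      · rw [hc2]; linarith
    refine no_interior_min x y φ x₀ hmin δ' hδ'pos hJIcc
      (fun t => ρ t + (c0 + c1*t + c2*t^2)) hψsc ?_ ?_
    · simp only [hφdef, hgdef]
      rw [hρeq]
    · intro t ht
      simp only [hφdef, hgdef]
      have := hρge t (hJsub ht)
      linarith
  -- deduce concavity
  refine ⟨hIinterval, fun x hx y hy a b ha hb hab => ?_⟩
  simp only [smul_eq_mul]
  rcases lt_trichotomy x y with hxy | hxy | hxy
  · have e1 : a * x + b * y - x = b * (y - x) := by linear_combination x * hab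
    have e2 : y - (a * x + b * y) = a * (y - x) := by linear_combination (-y) * hab
    have hcmem : a * x + b * y ∈ Icc x y := by
      constructor
      · nlinarith [mul_nonneg hb (sub_nonneg.2 hxy.le), e1]
      · nlinarith [mul_nonneg ha (sub_nonneg.2 hxy.le), e2]
    have h := key x hx y hy hxy (a * x + b * y) hcmem
    have hyx : y - x ≠ 0 := sub_ne_zero.2 (ne_of_gt hxy)
    have hc' : (a * x + b * y) - x = b * (y - x) := by linear_combination x * hab
    rw [hc'] at h
    have h2 : (u y - u x)/(y - x) * (b * (y - x)) = (u y - u x) * b := by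
      field_simp
    rw [h2] at h
    have h3 : u x + (u y - u x) * b = a * u x + b * u y := by
      linear_combination (-(u x)) * hab
    linarith
  · subst hxy
    have h1 : a * x + b * x = x := by linear_combination x * hab
    rw [h1]
    have : a * u x + b * u x = u x := by linear_combination (u x) * hab
    linarith
  · have e1 : a * x + b * y - y = a * (x - y) := by linear_combination y * hab
    have e2 : x - (a * x + b * y) = b * (x - y) := by linear_combination (-x) * hab
    have hcmem : a * x + b * y ∈ Icc y x := by
      constructor
      · nlinarith [mul_nonneg ha (sub_nonneg.2 hxy.le), e1]
      · nlinarith [mul_nonneg hb (sub_nonneg.2 hxy.le), e2]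
    have h := key y hy x hx hxy (a * x + b * y) hcmem
    have hyx : x - y ≠ 0 := sub_ne_zero.2 (ne_of_gt hxy)
    have hc' : (a * x + b * y) - y = a * (x - y) := by linear_combination y * hab
    rw [hc'] at h
    have h2 : (u x - u y)/(x - y) * (a * (x - y)) = (u x - u y) * a := by
      field_simp
    rw [h2] at h
    have h3 : u y + (u x - u y) * a = a * u x + b * u y := by
      linear_combination (-(u y)) * hab
    linarith
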